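/- Let X ~ N(μ, σ²) with σ > 0 and let τ² = [1, −2, 1] Σ [1, −2, 1]^T, where Σ is the 3×3 covariance matrix with entries Σ_{jk} = Cov(Y_1^{A_j}/w_j, Y_1^{A_k}/w_k) for (A_1, A_2, A_3) = (L, M, R) = (A[0,q̃], A[q̃,1−q̃], A[1−q̃,1]) and weights (w_1, w_2, w_3) = (q̃, 1−2q̃, q̃), with q̃ = Φ(x*) for x* the unique negative solution of −xΦ(x) − φ(x)(1−2Φ(x)) = 0. Then the matrix Σ/σ⁴, and hence the normalising constant ρ := τ/σ², does not depend on μ and σ: ρ equals the value of τ obtained when X is standard normal. -/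

import Mathlib

open MeasureTheory ProbabilityTheory Filter Real
open scoped Classical NNReal Topology BigOperators ProbabilityTheory

noncomputable section

/-- The standard normal density function φ. -/
def stdPdf (x : ℝ) : ℝ := (Real.sqrt (2 * Real.pi))⁻¹ * Real.exp (-(x ^ 2) / 2)

/-- The law of N(m, s²). -/
def gauss (m s : ℝ) : Measure ℝ := gaussianReal m (Real.toNNReal (s ^ 2))

/-- The cdf of N(m, s²). -/
def normCdf (m s : ℝ) (x : ℝ) : ℝ := cdf (gauss m s) x

/-- The standard normal cdf Φ. -/
def stdCdf (x : ℝ) : ℝ := normCdf 0 1 x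

/-- The quantile function of N(m, s²) (for 0 < p < 1). -/
def normQuantile (m s : ℝ) (p : ℝ) : ℝ := sInf {x : ℝ | p ≤ normCdf m s x}

/-- The standard normal quantile function Φ⁻¹ (for 0 < p < 1). -/
def stdQuantile (p : ℝ) : ℝ := normQuantile 0 1 p

/-- The conditioning set A[α, β] = {x : F⁻¹(α) < x ≤ F⁻¹(β)} for N(m, s²), with the
conventions F⁻¹(0) = −∞ (no lower restriction) and F⁻¹(1) = +∞ (no upper restriction). -/
def condSet (m s α β : ℝ) : Set ℝ :=
  {x : ℝ | (α = 0 ∨ normQuantile m s α < x) ∧ (β = 1 ∨ x ≤ normQuantile m s β)}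

/-- Conditional mean μ_A = E[X | X ∈ A[α,β]] for X ~ N(m, s²). -/
def condMean (m s α β : ℝ) : ℝ := ∫ x, x ∂((gauss m s)[|condSet m s α β])

/-- Conditional variance σ²_A = E[(X − μ_A)² | X ∈ A[α,β]] for X ~ N(m, s²). -/
def condVar (m s α β : ℝ) : ℝ :=
  ∫ x, (x - condMean m s α β) ^ 2 ∂((gauss m s)[|condSet m s α β])

/-- Conditional fourth central moment E[(X − μ_A)⁴ | X ∈ A[α,β]] for X ~ N(m, s²). -/
def condMom4 (m s α β : ℝ) : ℝ :=
  ∫ x, (x - condMean m s α β) ^ 4 ∂((gauss m s)[|condSet m s α β])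

/-- Conditional kurtosis κ_A = (σ²_A)⁻² E[(X − μ_A)⁴ | X ∈ A[α,β]] for X ~ N(m, s²). -/
def condKurt (m s α β : ℝ) : ℝ := (condVar m s α β ^ 2)⁻¹ * condMom4 m s α β

/-- The asymptotic variance τ²_A of the conditional variance estimator, with the
convention 0·∞ = 0 when α = 0 (a = −∞) or β = 1 (b = +∞). -/
def tauSq (m s α β : ℝ) : ℝ :=
  ((β - α) ^ 2)⁻¹ *
    ((β - α) * condVar m s α β ^ 2 * (condKurt m s α β - 1)
      + (if α = 0 then 0 else
          α * (1 - α) * ((normQuantile m s α - condMean m s α β) ^ 2 - condVar m s α β) ^ 2)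
      + (if β = 1 then 0 else
          β * (1 - β) * ((normQuantile m s β - condMean m s α β) ^ 2 - condVar m s α β) ^ 2)
      - (if α = 0 ∨ β = 1 then 0 else
          2 * α * (1 - β) * ((normQuantile m s α - condMean m s α β) ^ 2 - condVar m s α β)
            * ((normQuantile m s β - condMean m s α β) ^ 2 - condVar m s α β)))

/-- The random variable Y^A (as a function of the value of X), for X ~ N(m, s²) and
A = A[α,β]; terms involving the infinite endpoints a = −∞ (α = 0) or b = +∞ (β = 1)
vanish by the convention 0·∞ = 0. -/
def Yfun (m s α β : ℝ) (x : ℝ) : ℝ :=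
  (if x ∈ condSet m s α β then (x - condMean m s α β) ^ 2 - condVar m s α β else 0)
    + (if α = 0 then 0 else
        ((if x ≤ normQuantile m s α then (1 : ℝ) else 0) - α)
          * ((normQuantile m s α - condMean m s α β) ^ 2 - condVar m s α β))
    + (if β = 1 then 0 else
        (β - if x ≤ normQuantile m s β then (1 : ℝ) else 0)
          * ((normQuantile m s β - condMean m s α β) ^ 2 - condVar m s α β))

/-- Covariance of U(X) and V(X) for X ~ N(m, s²). -/
def covG (m s : ℝ) (U V : ℝ → ℝ) : ℝ :=
  ∫ x, U x * V x ∂(gauss m s) - (∫ x, U x ∂(gauss m s)) * (∫ x, V x ∂(gauss m s))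

/-- Variance of U(X) for X ~ N(m, s²). -/
def varG (m s : ℝ) (U : ℝ → ℝ) : ℝ := covG m s U U

/-- The quantile pairs defining the sets L = A[0,q̃], M = A[q̃,1−q̃], R = A[1−q̃,1]. -/
def lmrSet (q : ℝ) : Fin 3 → ℝ × ℝ := ![(0, q), (q, 1 - q), (1 - q, 1)]

/-- The weights (q̃, 1 − 2q̃, q̃). -/
def lmrWeight (q : ℝ) : Fin 3 → ℝ := ![q, 1 - 2 * q, q]

/-- The 3×3 asymptotic covariance matrix Σ with entries
Σ_{jk} = Cov(Y₁^{A_j}/w_j, Y₁^{A_k}/w_k), for X ~ N(m, s²). -/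
def SigmaMat (m s q : ℝ) : Matrix (Fin 3) (Fin 3) ℝ := fun j k =>
  covG m s (fun x => Yfun m s (lmrSet q j).1 (lmrSet q j).2 x / lmrWeight q j)
    (fun x => Yfun m s (lmrSet q k).1 (lmrSet q k).2 x / lmrWeight q k)

/-- τ² = [1, −2, 1] Σ [1, −2, 1]ᵀ. -/
def tau2 (m s q : ℝ) : ℝ := dotProduct ![1, -2, 1] ((SigmaMat m s q).mulVec ![1, -2, 1])

/-- The normalising constant ρ = τ/σ². -/
def rhoConst (m s q : ℝ) : ℝ := Real.sqrt (tau2 m s q) / s ^ 2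

/-- The k-th order statistic (k = 1, …, n) of the first n sample points X₁, …, Xₙ. -/
def orderStat {Ω : Type*} (X : ℕ → Ω → ℝ) (n k : ℕ) (ω : Ω) : ℝ :=
  sInf {t : ℝ | k ≤ (Finset.filter (fun i => X i ω ≤ t) (Finset.range n)).card}

/-- Conditional sample mean X̄_A = m_n⁻¹ Σ_{i=⌊nα⌋+1}^{⌊nβ⌋} X_(i), m_n = ⌊nβ⌋ − ⌊nα⌋. -/
def condSampleMean {Ω : Type*} (X : ℕ → Ω → ℝ) (α β : ℝ) (n : ℕ) (ω : Ω) : ℝ :=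
  ((⌊(n : ℝ) * β⌋₊ - ⌊(n : ℝ) * α⌋₊ : ℕ) : ℝ)⁻¹ *
    ∑ i ∈ Finset.Ioc ⌊(n : ℝ) * α⌋₊ ⌊(n : ℝ) * β⌋₊, orderStat X n i ω

/-- Conditional sample variance σ̂²_A = m_n⁻¹ Σ_{i=⌊nα⌋+1}^{⌊nβ⌋} (X_(i) − X̄_A)². -/
def condSampleVar {Ω : Type*} (X : ℕ → Ω → ℝ) (α β : ℝ) (n : ℕ) (ω : Ω) : ℝ :=
  ((⌊(n : ℝ) * β⌋₊ - ⌊(n : ℝ) * α⌋₊ : ℕ) : ℝ)⁻¹ *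
    ∑ i ∈ Finset.Ioc ⌊(n : ℝ) * α⌋₊ ⌊(n : ℝ) * β⌋₊,
      (orderStat X n i ω - condSampleMean X α β n ω) ^ 2

/-- Conditional variance estimator centered at a given value c:
m_n⁻¹ Σ_{i=⌊nα⌋+1}^{⌊nβ⌋} (X_(i) − c)². -/
def condSampleVarKnown {Ω : Type*} (X : ℕ → Ω → ℝ) (α β : ℝ) (c : ℝ) (n : ℕ) (ω : Ω) : ℝ :=
  ((⌊(n : ℝ) * β⌋₊ - ⌊(n : ℝ) * α⌋₊ : ℕ) : ℝ)⁻¹ *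
    ∑ i ∈ Finset.Ioc ⌊(n : ℝ) * α⌋₊ ⌊(n : ℝ) * β⌋₊, (orderStat X n i ω - c) ^ 2

/-- Convergence in distribution: the laws of S n under P converge weakly to ν,
tested against bounded continuous functions. -/
def ConvInDistrib {Ω : Type*} [MeasurableSpace Ω] (P : Measure Ω) (S : ℕ → Ω → ℝ)
    (ν : Measure ℝ) : Prop :=
  ∀ f : BoundedContinuousFunction ℝ ℝ,
    Tendsto (fun n => ∫ ω, f (S n ω) ∂P) atTop (𝓝 (∫ x, f x ∂ν))

end

noncomputable section

/-- The k-th smallest value (k = 1, …, n) among x 0, …, x (n−1). -/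
def orderStatF (n : ℕ) (x : ℕ → ℝ) (k : ℕ) : ℝ :=
  sInf {t : ℝ | k ≤ (Finset.filter (fun i => x i ≤ t) (Finset.range n)).card}

/-- Conditional sample mean of the data x over the index range ⌊nα⌋+1, …, ⌊nβ⌋. -/
def sampleMeanF (n : ℕ) (α β : ℝ) (x : ℕ → ℝ) : ℝ :=
  ((⌊(n : ℝ) * β⌋₊ - ⌊(n : ℝ) * α⌋₊ : ℕ) : ℝ)⁻¹ *
    ∑ i ∈ Finset.Ioc ⌊(n : ℝ) * α⌋₊ ⌊(n : ℝ) * β⌋₊, orderStatF n x i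

/-- Conditional sample variance of the data x over the index range ⌊nα⌋+1, …, ⌊nβ⌋. -/
def sampleVarF (n : ℕ) (α β : ℝ) (x : ℕ → ℝ) : ℝ :=
  ((⌊(n : ℝ) * β⌋₊ - ⌊(n : ℝ) * α⌋₊ : ℕ) : ℝ)⁻¹ *
    ∑ i ∈ Finset.Ioc ⌊(n : ℝ) * α⌋₊ ⌊(n : ℝ) * β⌋₊,
      (orderStatF n x i - sampleMeanF n α β x) ^ 2

/-- The (unnormalised) test statistic
T(x) = (σ̂²_L(x) + σ̂²_R(x) − 2 σ̂²_M(x)) √n / σ̂²(x) for the split 0 < q̃ < 1 − q̃ < 1. -/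
def TstatF (q : ℝ) (n : ℕ) (x : ℕ → ℝ) : ℝ :=
  (sampleVarF n 0 q x + sampleVarF n (1 - q) 1 x - 2 * sampleVarF n q (1 - q) x)
    * Real.sqrt n / sampleVarF n 0 1 x

end


section AuxProof

open MeasureTheory ProbabilityTheory Set

lemma gauss01 : gauss 0 1 = gaussianReal 0 1 := by
  unfold gauss; norm_num

instance gaussProb (m s : ℝ) : IsProbabilityMeasure (gauss m s) := by
  unfold gauss; infer_instance

lemma stdPdf_pos (x : ℝ) : 0 < stdPdf x := by
  unfold stdPdf; positivity

lemma q_bounds {x₀ q : ℝ} (hx₀ : x₀ < 0)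
    (hroot : -x₀ * stdCdf x₀ - stdPdf x₀ * (1 - 2 * stdCdf x₀) = 0)
    (hq : q = stdCdf x₀) : 0 < q ∧ q < 1/2 := by
  have h0 : 0 ≤ q := by rw [hq]; exact cdf_nonneg _ _
  have hp := stdPdf_pos x₀
  subst hq
  have hq0 : 0 < stdCdf x₀ := by
    rcases eq_or_lt_of_le h0 with h | h
    · exfalso; rw [← h] at hroot; nlinarith
    · exact h
  refine ⟨hq0, ?_⟩
  nlinarith [mul_pos (neg_pos.mpr hx₀) hq0]

lemma integ_exp_poly (n : ℕ) {b : ℝ} (hb : 0 < b) :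
    MeasureTheory.Integrable (fun x : ℝ => x ^ n * Real.exp (-b * x ^ 2)) := by
  have h := integrable_rpow_mul_exp_neg_mul_sq hb (s := (n : ℝ))
    (neg_one_lt_zero.trans_le (Nat.cast_nonneg n))
  simpa [Real.rpow_natCast] using h

lemma integ_pow (n : ℕ) : MeasureTheory.Integrable (fun x : ℝ => x ^ n) (gauss 0 1) := by
  rw [gauss01, gaussianReal_of_var_ne_zero _ one_ne_zero]
  rw [integrable_withDensity_iff (measurable_gaussianPDF _ _)
    (Filter.Eventually.of_forall fun x => ENNReal.ofReal_lt_top)]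
  have heq : (fun x : ℝ => x ^ n * (gaussianPDF 0 1 x).toReal)
      = fun x : ℝ => (Real.sqrt (2 * Real.pi))⁻¹ * (x ^ n * Real.exp (-(1/2) * x ^ 2)) := by
    funext x
    rw [gaussianPDF_def]
    rw [ENNReal.toReal_ofReal (gaussianPDFReal_nonneg _ _ _)]
    unfold gaussianPDFReal
    push_cast
    rw [show -(x - 0) ^ 2 / (2 * (1:ℝ)) = -(1/2) * x ^ 2 by ring]
    ring_nf
  rw [heq]
  exact (integ_exp_poly n one_half_pos).const_mul _

lemma measurableSet_condSet (m s α β : ℝ) : MeasurableSet (condSet m s α β) := by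
  have h : condSet m s α β
      = {x : ℝ | α = 0 ∨ normQuantile m s α < x} ∩ {x : ℝ | β = 1 ∨ x ≤ normQuantile m s β} := rfl
  rw [h]
  refine MeasurableSet.inter ?_ ?_
  · by_cases hα : α = 0
    · simp [hα]
    · simp only [hα, false_or]; exact measurableSet_Ioi
  · by_cases hβ : β = 1
    · simp [hβ]
    · simp only [hβ, false_or]; exact measurableSet_Iic

lemma measurable_Yfun (m s α β : ℝ) : Measurable (Yfun m s α β) := by
  unfold Yfun
  refine Measurable.add (Measurable.add ?_ ?_) ?_
  · exact Measurable.ite (measurableSet_condSet m s α β)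
      (((measurable_id.sub_const _).pow_const 2).sub_const _) measurable_const
  · by_cases hα : α = 0
    · simp only [hα, if_true]; exact measurable_const
    · simp only [hα, if_false]
      exact ((Measurable.ite measurableSet_Iic measurable_const measurable_const).sub_const
        _).mul_const _
  · by_cases hβ : β = 1
    · simp only [hβ, if_true]; exact measurable_const
    · simp only [hβ, if_false]
      exact ((measurable_const.sub
        (Measurable.ite measurableSet_Iic measurable_const measurable_const)).mul_const _)


lemma stdCdf_def (x : ℝ) : stdCdf x = cdf (gauss 0 1) x := rfl

lemma quantileSet_nonempty {p : ℝ} (hp1 : p < 1) :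
    {x : ℝ | p ≤ cdf (gauss 0 1) x}.Nonempty := by
  have h := tendsto_cdf_atTop (gauss 0 1)
  exact (h.eventually (eventually_ge_nhds hp1)).exists

lemma quantileSet_bddBelow {p : ℝ} (hp0 : 0 < p) :
    BddBelow {x : ℝ | p ≤ cdf (gauss 0 1) x} := by
  have h := tendsto_cdf_atBot (gauss 0 1)
  obtain ⟨y, hy⟩ := (h.eventually (eventually_lt_nhds hp0)).exists
  exact ⟨y, fun x hx => le_of_not_gt fun hlt =>
    absurd (le_trans hx (monotone_cdf _ hlt.le)) (not_le.mpr hy)⟩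

lemma gauss01_noAtom (a : ℝ) : gauss 0 1 {a} = 0 := by
  rw [gauss01]
  exact gaussianReal_absolutelyContinuous 0 one_ne_zero (measure_singleton a)

lemma stdCdf_stdQuantile {p : ℝ} (hp0 : 0 < p) (hp1 : p < 1) :
    stdCdf (stdQuantile p) = p := by
  have hne := quantileSet_nonempty hp1
  have hbdd := quantileSet_bddBelow hp0
  set F := cdf (gauss 0 1) with hF
  set S := {x : ℝ | p ≤ F x} with hS
  have ha : stdQuantile p = sInf S := rfl
  have hmem : ∀ x ∈ S, p ≤ F x := fun x hx => hx
  have h1 : p ≤ F (sInf S) := by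
    have hcont : ContinuousWithinAt F (Ici (sInf S)) (sInf S) := F.right_continuous _
    refine ge_of_tendsto (hcont.tendsto.mono_left (nhdsWithin_mono _ Ioi_subset_Ici_self)) ?_
    filter_upwards [self_mem_nhdsWithin] with x hx
    obtain ⟨y, hyS, hyx⟩ := (csInf_lt_iff hbdd hne).mp hx
    exact le_trans (hmem y hyS) (F.mono hyx.le)
  have h2 : ∀ x < sInf S, F x ≤ p := by
    intro x hx
    by_contra hc
    exact absurd (csInf_le hbdd (le_of_lt (not_le.mp hc) : p ≤ F x)) (not_le.mpr hx)
  have hll : Filter.Tendsto F (𝓝[<] (sInf S)) (𝓝 (Function.leftLim F (sInf S))) :=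
    F.mono.tendsto_leftLim _
  have h2a : Function.leftLim F (sInf S) ≤ p := by
    refine le_of_tendsto hll ?_
    filter_upwards [self_mem_nhdsWithin] with x hx
    exact h2 x hx
  have hsing : F.measure {sInf S} = ENNReal.ofReal (F (sInf S) - Function.leftLim F (sInf S)) :=
    F.measure_singleton _
  rw [hF, measure_cdf, gauss01_noAtom] at hsing
  have h3 : F (sInf S) - Function.leftLim F (sInf S) ≤ 0 :=
    ENNReal.ofReal_eq_zero.mp hsing.symm
  have : stdCdf (stdQuantile p) = F (sInf S) := by rw [ha]; rfl
  rw [this]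
  linarith


lemma gauss_map (m s : ℝ) :
    Measure.map (fun x => s * x + m) (gauss 0 1) = gauss m s := by
  have hg : gauss m s = gaussianReal m (⟨s ^ 2, sq_nonneg s⟩ : ℝ≥0) := by
    unfold gauss; rw [Real.toNNReal_of_nonneg (sq_nonneg s)]; rfl
  have hcomp : (fun x : ℝ => s * x + m) = (fun x : ℝ => x + m) ∘ (fun x : ℝ => s * x) := rfl
  rw [hg, gauss01, hcomp, ← Measure.map_map
    (by fun_prop : Measurable (fun x : ℝ => x + m))
    (by fun_prop : Measurable (fun x : ℝ => s * x))]
  rw [show (fun x : ℝ => s * x) = (s * ·) from rfl, gaussianReal_map_const_mul]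
  rw [show (fun x : ℝ => x + m) = (· + m) from rfl, gaussianReal_map_add_const]
  congr 1 <;> simp <;> rfl

lemma normCdf_eq {m s : ℝ} (hs : 0 < s) (x : ℝ) :
    normCdf m s x = stdCdf ((x - m) / s) := by
  have h1 : normCdf m s x = (gauss m s (Iic x)).toReal := cdf_eq_real _ x
  have h2 : stdCdf ((x - m)/s) = (gauss 0 1 (Iic ((x - m)/s))).toReal := cdf_eq_real _ _
  rw [h1, h2, ← gauss_map m s,
    Measure.map_apply (by fun_prop : Measurable (fun x : ℝ => s * x + m)) measurableSet_Iic]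
  congr 2
  ext y
  simp only [mem_preimage, mem_Iic]
  rw [le_div_iff₀ hs]
  constructor <;> intro h <;> linarith

lemma normQuantile_eq {m s : ℝ} (hs : 0 < s) {p : ℝ} (hp0 : 0 < p) (hp1 : p < 1) :
    normQuantile m s p = s * stdQuantile p + m := by
  have hset : {x : ℝ | p ≤ normCdf m s x}
      = (fun y => s * y + m) '' {y : ℝ | p ≤ cdf (gauss 0 1) y} := by
    ext x
    simp only [mem_setOf_eq, mem_image]
    constructor
    · intro hx
      refine ⟨(x - m)/s, ?_, by field_simp; ring⟩
      rw [normCdf_eq hs] at hx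
      exact hx
    · rintro ⟨y, hy, rfl⟩
      rw [normCdf_eq hs]
      have hyy : (s * y + m - m)/s = y := by field_simp; ring
      rw [hyy]
      exact hy
  have hmono : Monotone (fun y : ℝ => s * y + m) := fun a b hab => by
    dsimp only; nlinarith
  have hcont : ContinuousAt (fun y : ℝ => s * y + m)
      (sInf {y : ℝ | p ≤ cdf (gauss 0 1) y}) :=
    ((continuous_const.mul continuous_id).add continuous_const).continuousAt
  have h := hmono.map_csInf_of_continuousAt hcont
    (quantileSet_nonempty hp1) (quantileSet_bddBelow hp0)
  show sInf {x : ℝ | p ≤ normCdf m s x} = s * stdQuantile p + m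
  rw [hset, ← h]
  rfl

lemma condSet_eq {m s : ℝ} (hs : 0 < s) {α β : ℝ}
    (hα : α = 0 ∨ (0 < α ∧ α < 1)) (hβ : β = 1 ∨ (0 < β ∧ β < 1)) :
    condSet m s α β = (fun y => s * y + m) '' condSet 0 1 α β := by
  have himg : (fun y : ℝ => s * y + m) '' condSet 0 1 α β
      = {x : ℝ | (α = 0 ∨ normQuantile 0 1 α < (x - m)/s) ∧
          (β = 1 ∨ (x - m)/s ≤ normQuantile 0 1 β)} := by
    ext x
    simp only [mem_image]
    constructor
    · rintro ⟨y, hy, rfl⟩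
      have hyy : (s * y + m - m)/s = y := by field_simp; ring
      simp only [mem_setOf_eq, hyy]
      exact hy
    · intro h
      exact ⟨(x - m)/s, h, by field_simp; ring⟩
  rw [himg]
  ext x
  show (α = 0 ∨ normQuantile m s α < x) ∧ (β = 1 ∨ x ≤ normQuantile m s β) ↔ _
  simp only [mem_setOf_eq]
  have hQ : ∀ p : ℝ, stdQuantile p = normQuantile 0 1 p := fun _ => rfl
  refine and_congr ?_ ?_
  · rcases hα with h | ⟨h0, h1'⟩
    · simp [h]
    · have hne : ¬ (α = 0) := ne_of_gt h0
      simp only [hne, false_or]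
      rw [normQuantile_eq hs h0 h1', hQ α, lt_div_iff₀ hs]
      constructor <;> intro h <;> nlinarith
  · rcases hβ with h | ⟨h0, h1'⟩
    · simp [h]
    · have hne : ¬ (β = 1) := ne_of_lt h1'
      simp only [hne, false_or]
      rw [normQuantile_eq hs h0 h1', hQ β, div_le_iff₀ hs]
      constructor <;> intro h <;> nlinarith

lemma cdf_quantile01 {p : ℝ} (hp0 : 0 < p) (hp1 : p < 1) :
    cdf (gauss 0 1) (normQuantile 0 1 p) = p := stdCdf_stdQuantile hp0 hp1

lemma meas_condSet0 {α β : ℝ} (hα : α = 0 ∨ (0 < α ∧ α < 1)) (hβ : β = 1 ∨ (0 < β ∧ β < 1)) :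
    gauss 0 1 (condSet 0 1 α β) = ENNReal.ofReal (β - α) := by
  rcases hα with hα0 | ⟨ha0, ha1⟩ <;> rcases hβ with hβ1 | ⟨hb0, hb1⟩
  · have h : condSet 0 1 α β = univ := by
      ext x; simp [condSet, hα0, hβ1]
    rw [h, measure_univ, hα0, hβ1]; norm_num
  · have h : condSet 0 1 α β = Iic (normQuantile 0 1 β) := by
      ext x; simp [condSet, hα0, ne_of_lt hb1]
    rw [h, ← ofReal_cdf, cdf_quantile01 hb0 hb1, hα0, sub_zero]
  · have h : condSet 0 1 α β = Ioi (normQuantile 0 1 α) := by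
      ext x; simp [condSet, hβ1, ne_of_gt ha0]
    rw [h, ← Set.compl_Iic, measure_compl measurableSet_Iic (measure_ne_top _ _),
      measure_univ, ← ofReal_cdf, cdf_quantile01 ha0 ha1, hβ1,
      ← ENNReal.ofReal_one, ← ENNReal.ofReal_sub _ ha0.le]
  · have h : condSet 0 1 α β = Ioc (normQuantile 0 1 α) (normQuantile 0 1 β) := by
      ext x; simp [condSet, ne_of_gt ha0, ne_of_lt hb1, Set.mem_Ioc]
    rw [h, ← measure_cdf (gauss 0 1), StieltjesFunction.measure_Ioc,
      cdf_quantile01 ha0 ha1, cdf_quantile01 hb0 hb1]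


lemma cond_map {m s : ℝ} (hs : 0 < s) {α β : ℝ}
    (hα : α = 0 ∨ (0 < α ∧ α < 1)) (hβ : β = 1 ∨ (0 < β ∧ β < 1)) :
    (gauss m s)[|condSet m s α β]
      = Measure.map (fun y => s * y + m) ((gauss 0 1)[|condSet 0 1 α β]) := by
  have hf : Measurable (fun y : ℝ => s * y + m) := by fun_prop
  have hinj : Function.Injective (fun y : ℝ => s * y + m) := by
    intro a b hab
    dsimp only at hab
    have h2 : s * a = s * b := by linarith
    exact mul_left_cancel₀ (ne_of_gt hs) h2
  have hpre : (fun y : ℝ => s * y + m) ⁻¹' (condSet m s α β) = condSet 0 1 α β := by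
    rw [condSet_eq hs hα hβ]
    exact hinj.preimage_image _
  unfold ProbabilityTheory.cond
  rw [← gauss_map m s, Measure.restrict_map hf (measurableSet_condSet m s α β), hpre,
    Measure.map_apply hf (measurableSet_condSet m s α β), hpre, Measure.map_smul]

lemma condMean_eq {m s : ℝ} (hs : 0 < s) {α β : ℝ}
    (hα : α = 0 ∨ (0 < α ∧ α < 1)) (hβ : β = 1 ∨ (0 < β ∧ β < 1))
    (hpos : gauss 0 1 (condSet 0 1 α β) ≠ 0) :
    condMean m s α β = s * condMean 0 1 α β + m := by
  have hprob : IsProbabilityMeasure ((gauss 0 1)[|condSet 0 1 α β]) :=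
    cond_isProbabilityMeasure hpos
  have hf : Measurable (fun y : ℝ => s * y + m) := by fun_prop
  have hint : MeasureTheory.Integrable (fun y : ℝ => y) ((gauss 0 1)[|condSet 0 1 α β]) := by
    have h1 : MeasureTheory.Integrable (fun y : ℝ => y) (gauss 0 1) := by
      simpa using integ_pow 1
    unfold ProbabilityTheory.cond
    exact (h1.restrict).smul_measure (ENNReal.inv_ne_top.mpr hpos)
  have hg : MeasureTheory.AEStronglyMeasurable (fun x : ℝ => x)
      (Measure.map (fun y => s * y + m) ((gauss 0 1)[|condSet 0 1 α β])) :=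
    measurable_id.aestronglyMeasurable
  have hint1 : MeasureTheory.Integrable (fun y : ℝ => s * y)
      ((gauss 0 1)[|condSet 0 1 α β]) := hint.const_mul s
  unfold condMean
  rw [cond_map hs hα hβ, integral_map hf.aemeasurable hg,
    integral_add hint1 (integrable_const m), integral_const_mul,
    integral_const, probReal_univ, one_smul]

lemma condVar_eq {m s : ℝ} (hs : 0 < s) {α β : ℝ}
    (hα : α = 0 ∨ (0 < α ∧ α < 1)) (hβ : β = 1 ∨ (0 < β ∧ β < 1))
    (hpos : gauss 0 1 (condSet 0 1 α β) ≠ 0) :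
    condVar m s α β = s ^ 2 * condVar 0 1 α β := by
  have hf : Measurable (fun y : ℝ => s * y + m) := by fun_prop
  unfold _root_.condVar
  rw [cond_map hs hα hβ, integral_map hf.aemeasurable
    (Continuous.aestronglyMeasurable (by fun_prop))]
  rw [condMean_eq hs hα hβ hpos]
  rw [show (fun x : ℝ => (s * x + m - (s * condMean 0 1 α β + m)) ^ 2)
      = fun x : ℝ => s ^ 2 * (x - condMean 0 1 α β) ^ 2 from funext fun x => by ring]
  rw [integral_const_mul]

lemma Yfun_comp {m s : ℝ} (hs : 0 < s) {α β : ℝ}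
    (hα : α = 0 ∨ (0 < α ∧ α < 1)) (hβ : β = 1 ∨ (0 < β ∧ β < 1))
    (hpos : gauss 0 1 (condSet 0 1 α β) ≠ 0) (x : ℝ) :
    Yfun m s α β (s * x + m) = s ^ 2 * Yfun 0 1 α β x := by
  have hQ : ∀ p : ℝ, stdQuantile p = normQuantile 0 1 p := fun _ => rfl
  have hinj : Function.Injective (fun y : ℝ => s * y + m) := by
    intro a b hab
    dsimp only at hab
    have h2 : s * a = s * b := by linarith
    exact mul_left_cancel₀ (ne_of_gt hs) h2
  have hmem : (s * x + m ∈ condSet m s α β) ↔ x ∈ condSet 0 1 α β := by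
    rw [condSet_eq hs hα hβ]
    exact hinj.mem_set_image
  have hμ := condMean_eq (m := m) hs hα hβ hpos
  have hv := condVar_eq (m := m) hs hα hβ hpos
  unfold Yfun
  rcases hα with hα0 | ⟨ha0, ha1⟩ <;> rcases hβ with hβ1 | ⟨hb0, hb1⟩
  · subst hα0; subst hβ1
    by_cases h1 : x ∈ condSet 0 1 0 1 <;>
      simp only [hmem, h1, eq_self_iff_true, if_true, if_false, hμ, hv] <;> ring
  · subst hα0
    have hne_b : ¬ (β = 1) := ne_of_lt hb1
    have hcb : (s * x + m ≤ s * normQuantile 0 1 β + m) ↔ (x ≤ normQuantile 0 1 β) := by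
      constructor <;> intro h <;> nlinarith
    by_cases h1 : x ∈ condSet 0 1 0 β <;> by_cases h3 : x ≤ normQuantile 0 1 β <;>
      simp only [hne_b, eq_self_iff_true, if_true, if_false, hmem, hcb, h1, h3, hμ, hv,
        normQuantile_eq hs hb0 hb1, hQ] <;> ring
  · subst hβ1
    have hne_a : ¬ (α = 0) := ne_of_gt ha0
    have hca : (s * x + m ≤ s * normQuantile 0 1 α + m) ↔ (x ≤ normQuantile 0 1 α) := by
      constructor <;> intro h <;> nlinarith
    by_cases h1 : x ∈ condSet 0 1 α 1 <;> by_cases h2 : x ≤ normQuantile 0 1 α <;>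
      simp only [hne_a, eq_self_iff_true, if_true, if_false, hmem, hca, h1, h2, hμ, hv,
        normQuantile_eq hs ha0 ha1, hQ] <;> ring
  · have hne_a : ¬ (α = 0) := ne_of_gt ha0
    have hne_b : ¬ (β = 1) := ne_of_lt hb1
    have hca : (s * x + m ≤ s * normQuantile 0 1 α + m) ↔ (x ≤ normQuantile 0 1 α) := by
      constructor <;> intro h <;> nlinarith
    have hcb : (s * x + m ≤ s * normQuantile 0 1 β + m) ↔ (x ≤ normQuantile 0 1 β) := by
      constructor <;> intro h <;> nlinarith
    by_cases h1 : x ∈ condSet 0 1 α β <;> by_cases h2 : x ≤ normQuantile 0 1 α <;>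
      by_cases h3 : x ≤ normQuantile 0 1 β <;>
      simp only [hne_a, hne_b, if_true, if_false, hmem, hca, hcb, h1, h2, h3, hμ, hv,
        normQuantile_eq hs ha0 ha1, normQuantile_eq hs hb0 hb1, hQ] <;> ring

lemma covG_scale {m s : ℝ} (hs : 0 < s) {α β α' β' : ℝ}
    (hα : α = 0 ∨ (0 < α ∧ α < 1)) (hβ : β = 1 ∨ (0 < β ∧ β < 1)) (hlt : α < β)
    (hα' : α' = 0 ∨ (0 < α' ∧ α' < 1)) (hβ' : β' = 1 ∨ (0 < β' ∧ β' < 1)) (hlt' : α' < β')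
    (w w' : ℝ) :
    covG m s (fun x => Yfun m s α β x / w) (fun x => Yfun m s α' β' x / w')
      = s ^ 4 * covG 0 1 (fun x => Yfun 0 1 α β x / w) (fun x => Yfun 0 1 α' β' x / w') := by
  have hpos : gauss 0 1 (condSet 0 1 α β) ≠ 0 := by
    rw [meas_condSet0 hα hβ]
    exact ne_of_gt (ENNReal.ofReal_pos.mpr (by linarith))
  have hpos' : gauss 0 1 (condSet 0 1 α' β') ≠ 0 := by
    rw [meas_condSet0 hα' hβ']
    exact ne_of_gt (ENNReal.ofReal_pos.mpr (by linarith))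
  have hf : Measurable (fun y : ℝ => s * y + m) := by fun_prop
  have hY : ∀ x : ℝ, Yfun m s α β (s * x + m) = s ^ 2 * Yfun 0 1 α β x :=
    fun x => Yfun_comp hs hα hβ hpos x
  have hY' : ∀ x : ℝ, Yfun m s α' β' (s * x + m) = s ^ 2 * Yfun 0 1 α' β' x :=
    fun x => Yfun_comp hs hα' hβ' hpos' x
  have hm1 : MeasureTheory.AEStronglyMeasurable
      (fun x => Yfun m s α β x / w * (Yfun m s α' β' x / w'))
      (Measure.map (fun y => s * y + m) (gauss 0 1)) :=
    (((measurable_Yfun m s α β).div_const w).mul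
      ((measurable_Yfun m s α' β').div_const w')).aestronglyMeasurable
  have hm2 : MeasureTheory.AEStronglyMeasurable (fun x => Yfun m s α β x / w)
      (Measure.map (fun y => s * y + m) (gauss 0 1)) :=
    ((measurable_Yfun m s α β).div_const w).aestronglyMeasurable
  have hm3 : MeasureTheory.AEStronglyMeasurable (fun x => Yfun m s α' β' x / w')
      (Measure.map (fun y => s * y + m) (gauss 0 1)) :=
    ((measurable_Yfun m s α' β').div_const w').aestronglyMeasurable
  unfold covG
  rw [← gauss_map m s, integral_map hf.aemeasurable hm1, integral_map hf.aemeasurable hm2,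
    integral_map hf.aemeasurable hm3]
  simp only [hY, hY']
  simp only [mul_div_assoc]
  simp_rw [show ∀ a b : ℝ, s ^ 2 * a * (s ^ 2 * b) = s ^ 4 * (a * b) from fun a b => by ring]
  rw [integral_const_mul, integral_const_mul, integral_const_mul]
  ring

end AuxProof

theorem SigmaMat_scale_invariant (m s : ℝ) (hs : 0 < s) (x₀ q : ℝ) (hx₀ : x₀ < 0)
    (hroot : -x₀ * stdCdf x₀ - stdPdf x₀ * (1 - 2 * stdCdf x₀) = 0)
    (hq : q = stdCdf x₀) :
    (∀ j k : Fin 3, SigmaMat m s q j k / s ^ 4 = SigmaMat 0 1 q j k) ∧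
    rhoConst m s q = Real.sqrt (tau2 0 1 q) := by
  obtain ⟨hq0, hq2⟩ := q_bounds hx₀ hroot hq
  have hq1 : q < 1 := by linarith
  have hOK : ∀ j : Fin 3,
      ((lmrSet q j).1 = 0 ∨ (0 < (lmrSet q j).1 ∧ (lmrSet q j).1 < 1)) ∧
      ((lmrSet q j).2 = 1 ∨ (0 < (lmrSet q j).2 ∧ (lmrSet q j).2 < 1)) ∧
      (lmrSet q j).1 < (lmrSet q j).2 := by
    intro j
    fin_cases j
    · exact ⟨Or.inl (show (0:ℝ) = 0 from rfl),
        Or.inr (show (0:ℝ) < q ∧ q < 1 from ⟨hq0, hq1⟩), show (0:ℝ) < q from hq0⟩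
    · exact ⟨Or.inr (show (0:ℝ) < q ∧ q < 1 from ⟨hq0, hq1⟩),
        Or.inr (show (0:ℝ) < 1 - q ∧ 1 - q < 1 from ⟨by linarith, by linarith⟩),
        show q < 1 - q by linarith⟩
    · exact ⟨Or.inr (show (0:ℝ) < 1 - q ∧ 1 - q < 1 from ⟨by linarith, by linarith⟩),
        Or.inl (show (1:ℝ) = 1 from rfl), show 1 - q < 1 by linarith⟩
  have hSig : ∀ j k : Fin 3, SigmaMat m s q j k = s ^ 4 * SigmaMat 0 1 q j k := by
    intro j k
    have h := covG_scale (m := m) hs (hOK j).1 (hOK j).2.1 (hOK j).2.2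
      (hOK k).1 (hOK k).2.1 (hOK k).2.2 (lmrWeight q j) (lmrWeight q k)
    simpa only [SigmaMat] using h
  have hs2 : (0:ℝ) < s ^ 2 := by positivity
  have hs4 : (s:ℝ) ^ 4 ≠ 0 := by positivity
  constructor
  · intro j k
    rw [hSig j k]
    field_simp
  · have htau : tau2 m s q = s ^ 4 * tau2 0 1 q := by
      unfold tau2
      simp only [dotProduct, Matrix.mulVec, Fin.sum_univ_three, Matrix.cons_val_zero,
        Matrix.cons_val_one, Matrix.head_cons, Matrix.cons_val_two, Matrix.tail_cons,
        Fin.isValue, hSig]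
      ring
    unfold rhoConst
    rw [htau, show (s:ℝ) ^ 4 = (s ^ 2) ^ 2 by ring, Real.sqrt_mul (by positivity),
      Real.sqrt_sq hs2.le]
    field_simp
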